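/- Improvement of subsolutions (Theorem 3.1, inequality part): let Ȳ be a subsolution, M̄ ∈ M_D the Doob martingale of βȲ, and r̄ ∈ A_0 an adapted process with r̄_i^⊤ E_i[β_{i+1} Ȳ_{i+1}] − F_i^{#}(r̄_i) = F_i(E_i[β_{i+1} Ȳ_{i+1}]) P-a.s. for every i = 0,...,J-1. Then for any M ∈ M_D and all i = 0,...,J-1, Y_i ≥ E_i[θ_i^{low}(r̄,M)] ≥ F_i(E_i[β_{i+1} Ȳ_{i+1}]) ≥ Ȳ_i P-a.s., where Y is the true solution. -/

import Mathlib

open MeasureTheory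
open scoped ENNReal

noncomputable section

variable {Ω : Type*} {m0 : MeasurableSpace Ω}

/-- `L^{∞-}`: membership in `L^p` for every finite `p ≥ 1`. -/
def MemLinfMinus {E : Type*} [NormedAddCommGroup E] (μ : Measure Ω) (f : Ω → E) : Prop :=
  ∀ p : ℝ≥0∞, 1 ≤ p → p ≠ ⊤ → MemLp f p μ

/-- Euclidean dot product on `Fin D → ℝ`. -/
def dotp {D : ℕ} (x y : Fin D → ℝ) : ℝ := ∑ d, x d * y d

/-- Componentwise conditional expectation of an `ℝ^D`-valued random vector. -/
def cexpV (μ : Measure Ω) (m : MeasurableSpace Ω) {D : ℕ} (f : Ω → Fin D → ℝ) :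
    Ω → Fin D → ℝ :=
  fun ω d => (μ[fun ω' => f ω' d|m]) ω

/-- The `ℝ^D`-valued process `β_j Y_j` (vector weight times scalar process). -/
def bprod {D : ℕ} (β : ℕ → Ω → Fin D → ℝ) (Y : ℕ → Ω → ℝ) (j : ℕ) : Ω → Fin D → ℝ :=
  fun ω d => β j ω d * Y j ω

/-- Convex (Fenchel) conjugate, with values in `EReal`. -/
def econj {D : ℕ} (f : (Fin D → ℝ) → ℝ) (u : Fin D → ℝ) : EReal :=
  ⨆ z : Fin D → ℝ, ((dotp u z - f z : ℝ) : EReal)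

/-- Real-valued version of the convex conjugate (meaningful where the conjugate is finite). -/
def rconj {D : ℕ} (f : (Fin D → ℝ) → ℝ) (u : Fin D → ℝ) : ℝ := (econj f u).toReal

/-- The Doob martingale of an `ℝ^D`-valued process `Z`:
`j ↦ ∑_{i=0}^{j-1} (Z_{i+1} - E_i[Z_{i+1}])`. -/
def doobMart (μ : Measure Ω) (ℱ : Filtration ℕ m0) {D : ℕ} (Z : ℕ → Ω → Fin D → ℝ) :
    ℕ → Ω → Fin D → ℝ :=
  fun j ω d => ∑ i ∈ Finset.range j, (Z (i + 1) ω d - cexpV μ (ℱ i) (Z (i + 1)) ω d)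

/-- Standing assumptions on the data `(F, β, ξ)` of the convex dynamic program:
measurability, adaptedness and convexity of the generator, polynomial growth with an
`L^{∞-}` coefficient, and integrability/adaptedness of the weights and terminal condition. -/
structure Setting (μ : Measure Ω) (ℱ : Filtration ℕ m0) (J D : ℕ)
    (F : ℕ → Ω → (Fin D → ℝ) → ℝ) (β : ℕ → Ω → Fin D → ℝ) (ξ : Ω → ℝ) : Prop where
  F_meas : ∀ j < J, Measurable fun p : Ω × (Fin D → ℝ) => F j p.1 p.2
  F_adapted : ∀ j < J, ∀ z : Fin D → ℝ, StronglyMeasurable[ℱ j] fun ω => F j ω z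
  F_convex : ∀ j < J, ∀ ω, ConvexOn ℝ Set.univ (F j ω)
  F_growth : ∃ q : ℝ, 0 ≤ q ∧ ∃ α : ℕ → Ω → ℝ,
      (∀ j < J, StronglyMeasurable[ℱ j] (α j)) ∧
      (∀ j < J, ∀ᵐ ω ∂μ, 0 ≤ α j ω) ∧ (∀ j < J, MemLinfMinus μ (α j)) ∧
      ∀ j < J, ∀ z : Fin D → ℝ, ∀ᵐ ω ∂μ, |F j ω z| ≤ α j ω * (1 + ‖z‖ ^ q)
  β_adapted : ∀ j ≤ J, StronglyMeasurable[ℱ j] (β j)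
  β_int : ∀ j ≤ J, MemLinfMinus μ (β j)
  ξ_meas : StronglyMeasurable[ℱ J] ξ
  ξ_int : MemLinfMinus μ ξ

/-- `Y` is an adapted `L^{∞-}` solution of the dynamic programming equation
`Y_j = F_j(E_j[β_{j+1} Y_{j+1}])`, `Y_J = ξ`. -/
def IsSolution (μ : Measure Ω) (ℱ : Filtration ℕ m0) (J D : ℕ)
    (F : ℕ → Ω → (Fin D → ℝ) → ℝ) (β : ℕ → Ω → Fin D → ℝ) (ξ : Ω → ℝ)
    (Y : ℕ → Ω → ℝ) : Prop :=
  (∀ j ≤ J, StronglyMeasurable[ℱ j] (Y j) ∧ MemLinfMinus μ (Y j)) ∧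
  (∀ᵐ ω ∂μ, Y J ω = ξ ω) ∧
  (∀ j < J, ∀ᵐ ω ∂μ, Y j ω = F j ω (cexpV μ (ℱ j) (bprod β Y (j + 1)) ω))

/-- Supersolution of the dynamic program. -/
def IsSupersolution (μ : Measure Ω) (ℱ : Filtration ℕ m0) (J D : ℕ)
    (F : ℕ → Ω → (Fin D → ℝ) → ℝ) (β : ℕ → Ω → Fin D → ℝ) (ξ : Ω → ℝ)
    (Y : ℕ → Ω → ℝ) : Prop :=
  (∀ j ≤ J, StronglyMeasurable[ℱ j] (Y j) ∧ MemLinfMinus μ (Y j)) ∧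
  (∀ᵐ ω ∂μ, ξ ω ≤ Y J ω) ∧
  (∀ j < J, ∀ᵐ ω ∂μ, F j ω (cexpV μ (ℱ j) (bprod β Y (j + 1)) ω) ≤ Y j ω)

/-- Subsolution of the dynamic program. -/
def IsSubsolution (μ : Measure Ω) (ℱ : Filtration ℕ m0) (J D : ℕ)
    (F : ℕ → Ω → (Fin D → ℝ) → ℝ) (β : ℕ → Ω → Fin D → ℝ) (ξ : Ω → ℝ)
    (Y : ℕ → Ω → ℝ) : Prop :=
  (∀ j ≤ J, StronglyMeasurable[ℱ j] (Y j) ∧ MemLinfMinus μ (Y j)) ∧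
  (∀ᵐ ω ∂μ, Y J ω ≤ ξ ω) ∧
  (∀ j < J, ∀ᵐ ω ∂μ, Y j ω ≤ F j ω (cexpV μ (ℱ j) (bprod β Y (j + 1)) ω))

/-- The monotonicity assumption: `Y⁽¹⁾ ≥ Y⁽²⁾` a.s. implies
`F_j(β_{j+1} Y⁽¹⁾) ≥ F_j(β_{j+1} Y⁽²⁾)` a.s. -/
def MonoAssumption (μ : Measure Ω) (J D : ℕ)
    (F : ℕ → Ω → (Fin D → ℝ) → ℝ) (β : ℕ → Ω → Fin D → ℝ) : Prop :=
  ∀ j < J, ∀ Y1 Y2 : Ω → ℝ, MemLinfMinus μ Y1 → MemLinfMinus μ Y2 →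
    (∀ᵐ ω ∂μ, Y2 ω ≤ Y1 ω) →
    ∀ᵐ ω ∂μ, F j ω (fun d => β (j + 1) ω d * Y2 ω) ≤ F j ω (fun d => β (j + 1) ω d * Y1 ω)

/-- The class `M_D` of `ℝ^D`-valued `L^{∞-}` martingales. -/
def IsMartD (μ : Measure Ω) (ℱ : Filtration ℕ m0) {D : ℕ}
    (M : ℕ → Ω → Fin D → ℝ) : Prop :=
  Martingale M ℱ μ ∧ ∀ j, MemLinfMinus μ (M j)

/-- Admissible controls on the time indices `{j₀, ..., J-1}` (the class `A_{j₀}`). -/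
def IsAdmissibleFrom (μ : Measure Ω) (ℱ : Filtration ℕ m0) (j₀ J D : ℕ)
    (F : ℕ → Ω → (Fin D → ℝ) → ℝ) (r : ℕ → Ω → Fin D → ℝ) : Prop :=
  ∀ i, j₀ ≤ i → i < J →
    StronglyMeasurable[ℱ i] (r i) ∧ MemLinfMinus μ (r i) ∧
    (∀ᵐ ω ∂μ, econj (F i ω) (r i ω) ≠ ⊤) ∧
    MemLinfMinus μ (fun ω => rconj (F i ω) (r i ω))

/-- The lower pathwise recursion `θ^{low}(r, M)`:
`θ_J = ξ`, `θ_i = r_i^⊤ (β_{i+1} θ_{i+1}) - r_i^⊤ ΔM_{i+1} - F_i^{#}(r_i)`,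
required on the time indices `{j₀, ..., J-1}`. -/
def IsThetaLowFrom (μ : Measure Ω) (j₀ J D : ℕ)
    (F : ℕ → Ω → (Fin D → ℝ) → ℝ) (β : ℕ → Ω → Fin D → ℝ) (ξ : Ω → ℝ)
    (r M : ℕ → Ω → Fin D → ℝ) (θ : ℕ → Ω → ℝ) : Prop :=
  (∀ᵐ ω ∂μ, θ J ω = ξ ω) ∧
  ∀ i, j₀ ≤ i → i < J → ∀ᵐ ω ∂μ,
    θ i ω = dotp (r i ω) (fun d => β (i + 1) ω d * θ (i + 1) ω)
      - dotp (r i ω) (fun d => M (i + 1) ω d - M i ω d) - rconj (F i ω) (r i ω)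

/-- The upper pathwise recursion `θ^{up}(M)`:
`θ_J = ξ`, `θ_j = F_j(β_{j+1} θ_{j+1} - ΔM_{j+1})`. -/
def IsThetaUp (μ : Measure Ω) (J D : ℕ)
    (F : ℕ → Ω → (Fin D → ℝ) → ℝ) (β : ℕ → Ω → Fin D → ℝ) (ξ : Ω → ℝ)
    (M : ℕ → Ω → Fin D → ℝ) (θ : ℕ → Ω → ℝ) : Prop :=
  (∀ᵐ ω ∂μ, θ J ω = ξ ω) ∧
  ∀ j < J, ∀ᵐ ω ∂μ,
    θ j ω = F j ω (fun d => β (j + 1) ω d * θ (j + 1) ω - (M (j + 1) ω d - M j ω d))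

/-- The optimality condition `r_i^⊤ E_i[β_{i+1} Y_{i+1}] - F_i^{#}(r_i) = F_i(E_i[β_{i+1} Y_{i+1}])`
on the time indices `{j₀, ..., J-1}`. -/
def OptimalityCond (μ : Measure Ω) (ℱ : Filtration ℕ m0) (j₀ J D : ℕ)
    (F : ℕ → Ω → (Fin D → ℝ) → ℝ) (β : ℕ → Ω → Fin D → ℝ)
    (Y : ℕ → Ω → ℝ) (r : ℕ → Ω → Fin D → ℝ) : Prop :=
  ∀ i, j₀ ≤ i → i < J → ∀ᵐ ω ∂μ,
    dotp (r i ω) (cexpV μ (ℱ i) (bprod β Y (i + 1)) ω) - rconj (F i ω) (r i ω)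
      = F i ω (cexpV μ (ℱ i) (bprod β Y (i + 1)) ω)


/- ===== auxiliary lemmas ===== -/

lemma MemLinfMinus.integrable {μ : Measure Ω} [IsFiniteMeasure μ] {f : Ω → ℝ}
    (hf : MemLinfMinus μ f) : Integrable f μ :=
  (hf 1 le_rfl ENNReal.one_ne_top).integrable le_rfl

lemma MemLinfMinus.aesm {μ : Measure Ω} {E : Type*} [NormedAddCommGroup E] {f : Ω → E}
    (hf : MemLinfMinus μ f) : AEStronglyMeasurable f μ := (hf 1 le_rfl ENNReal.one_ne_top).1

lemma MemLinfMinus.mul {μ : Measure Ω} {f g : Ω → ℝ} (hf : MemLinfMinus μ f)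
    (hg : MemLinfMinus μ g) : MemLinfMinus μ (fun ω => f ω * g ω) := by
  intro p hp hpt
  have h2p1 : (1:ℝ≥0∞) ≤ 2 * p := le_trans hp (by
    nth_rewrite 1 [← one_mul p]
    exact mul_le_mul_left one_le_two p)
  have h2pt : (2 : ℝ≥0∞) * p ≠ ⊤ := ENNReal.mul_ne_top (by norm_num) hpt
  have hpqr : 1 / p = 1 / (2 * p) + 1 / (2 * p) := by
    rw [← two_mul, mul_one_div, ← ENNReal.mul_div_mul_left (c := 2) 1 p (by norm_num) (by norm_num),
      mul_one]
  have := (hf (2*p) h2p1 h2pt).smul (𝕜 := ℝ) (r := p) (hg (2*p) h2p1 h2pt)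
    (hpqr := ⟨by simpa only [one_div] using hpqr.symm⟩)
  convert this using 1
  funext ω
  simp [mul_comm]

lemma MemLinfMinus.const {μ : Measure Ω} [IsFiniteMeasure μ] (c : ℝ) :
    MemLinfMinus μ (fun _ => c) := fun p _ _ => memLp_const c

lemma MemLinfMinus.add {μ : Measure Ω} {f g : Ω → ℝ} (hf : MemLinfMinus μ f)
    (hg : MemLinfMinus μ g) : MemLinfMinus μ (fun ω => f ω + g ω) :=
  fun p hp hpt => (hf p hp hpt).add (hg p hp hpt)

lemma MemLinfMinus.sub {μ : Measure Ω} {f g : Ω → ℝ} (hf : MemLinfMinus μ f)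
    (hg : MemLinfMinus μ g) : MemLinfMinus μ (fun ω => f ω - g ω) :=
  fun p hp hpt => (hf p hp hpt).sub (hg p hp hpt)

lemma MemLinfMinus.sum {μ : Measure Ω} {ι : Type*} (s : Finset ι) {f : ι → Ω → ℝ}
    (hf : ∀ j ∈ s, MemLinfMinus μ (f j)) :
    MemLinfMinus μ (fun ω => ∑ j ∈ s, f j ω) := by
  intro p hp hpt
  have := memLp_finset_sum' s (fun j hj => hf j hj p hp hpt)
  exact this.ae_eq (Filter.Eventually.of_forall (fun ω => by simp))

lemma MemLinfMinus.congr {μ : Measure Ω} {f g : Ω → ℝ} (hf : MemLinfMinus μ f)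
    (h : f =ᵐ[μ] g) : MemLinfMinus μ g := fun p hp hpt => (hf p hp hpt).ae_eq h

lemma MemLinfMinus.comp_apply {μ : Measure Ω} {D : ℕ} {f : Ω → Fin D → ℝ}
    (hf : MemLinfMinus μ f) (d : Fin D) : MemLinfMinus μ (fun ω => f ω d) := by
  intro p hp hpt
  refine (hf p hp hpt).of_le ((continuous_apply d).comp_aestronglyMeasurable (hf.aesm)) ?_
  exact Filter.Eventually.of_forall (fun ω => by simpa using norm_le_pi_norm (f ω) d)

lemma dotp_mul_right {D : ℕ} (x y : Fin D → ℝ) (t : ℝ) :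
    dotp x (fun d => y d * t) = dotp x y * t := by
  simp only [dotp, Finset.sum_mul]; exact Finset.sum_congr rfl (fun d _ => by ring)

lemma fenchel {D : ℕ} (f : (Fin D → ℝ) → ℝ) (r z : Fin D → ℝ) (hF : econj f r ≠ ⊤) :
    dotp r z - rconj f r ≤ f z := by
  have h1 : ((dotp r z - f z : ℝ) : EReal) ≤ econj f r :=
    le_iSup (fun z => ((dotp r z - f z : ℝ) : EReal)) z
  have hbot : econj f r ≠ ⊥ := by
    intro h; rw [h, le_bot_iff] at h1; exact EReal.coe_ne_bot _ h1
  have := EReal.toReal_le_toReal h1 (EReal.coe_ne_bot _) hF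
  rw [EReal.toReal_coe] at this
  have : dotp r z - f z ≤ rconj f r := this
  linarith

/-- Key positivity: monotone along the ray `ℝβ` + optimality at `zs` implies `r⊤β ≥ 0`. -/
lemma key_pos {D : ℕ} (f : (Fin D → ℝ) → ℝ) (r βv zs : Fin D → ℝ)
    (hmono : ∀ n : ℕ, f (fun d => βv d * (-(n:ℝ))) ≤ f (fun d => βv d * (0:ℝ)))
    (hF : econj f r ≠ ⊤)
    (hopt : dotp r zs - rconj f r = f zs) :
    0 ≤ dotp r βv := by
  by_contra hneg
  push_neg at hneg
  obtain ⟨n, hn⟩ := exists_nat_gt ((f (fun d => βv d * (0:ℝ)) - f zs + dotp r zs) / (-dotp r βv))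
  have h1 := fenchel f r (fun d => βv d * (-(n:ℝ))) hF
  rw [dotp_mul_right] at h1
  have h2 := hmono n
  have hc : rconj f r = dotp r zs - f zs := by linarith
  rw [hc] at h1
  have hpos : 0 < -dotp r βv := by linarith
  rw [div_lt_iff₀ hpos] at hn
  nlinarith

/-- Composition `ω ↦ h ω (g ω)` is strongly measurable when `h` is strongly measurable in `ω`
for each fixed `z`, continuous in `z`, and `g` is strongly measurable. -/
lemma comp_sm {m : MeasurableSpace Ω} {D : ℕ} {h : Ω → (Fin D → ℝ) → ℝ}
    (hz : ∀ z, StronglyMeasurable[m] fun ω => h ω z) (hc : ∀ ω, Continuous (h ω))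
    {g : Ω → Fin D → ℝ} (hg : StronglyMeasurable[m] g) :
    StronglyMeasurable[m] fun ω => h ω (g ω) := by
  have hsimple : ∀ n : ℕ, StronglyMeasurable[m] fun ω => h ω (hg.approx n ω) := by
    intro n
    set s := hg.approx n
    have heq : (fun ω => h ω (s ω)) =
        fun ω => ∑ c ∈ s.range, if s ω = c then h ω c else 0 := by
      funext ω
      rw [Finset.sum_ite_eq s.range (s ω) (fun c => h ω c)]
      simp [SimpleFunc.mem_range_self]
    rw [heq]
    refine Measurable.stronglyMeasurable ?_
    refine Finset.measurable_sum _ (fun c _ => ?_)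
    refine Measurable.ite ?_ ((hz c).measurable) measurable_const
    exact s.measurableSet_preimage {c}
  refine stronglyMeasurable_of_tendsto (m := m) Filter.atTop hsimple ?_
  rw [tendsto_pi_nhds]
  intro ω
  exact ((hc ω).tendsto (g ω)).comp (hg.tendsto_approx ω)

/-- Conditional expectation of an `ℝ^D`-valued integrable function, componentwise. -/
lemma condexp_apply_ae {Ω' : Type*} {m mΩ : MeasurableSpace Ω'} {μ : @Measure Ω' mΩ}
    [IsProbabilityMeasure μ] (hm : m ≤ mΩ) {D : ℕ} {f : Ω' → Fin D → ℝ}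
    (hf : Integrable f μ) (d : Fin D) :
    (fun ω => (μ[f|m]) ω d) =ᵐ[μ] μ[fun ω => f ω d|m] := by
  have hproj : ∀ {u : Ω' → Fin D → ℝ}, Integrable u μ → Integrable (fun ω => u ω d) μ :=
    fun {u} hu => (ContinuousLinearMap.proj (R := ℝ) (φ := fun _ : Fin D => ℝ) d).integrable_comp hu
  refine (ae_eq_condExp_of_forall_setIntegral_eq hm (hproj hf) ?_ ?_ ?_).symm.symm
  · exact fun s _ _ => (hproj integrable_condExp).integrableOn
  · intro s hs _
    have h1 : ∫ ω in s, (μ[f|m]) ω d ∂μ =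
        (ContinuousLinearMap.proj (R := ℝ) (φ := fun _ : Fin D => ℝ) d)
          (∫ ω in s, (μ[f|m]) ω ∂μ) :=
      (ContinuousLinearMap.proj (R := ℝ) (φ := fun _ : Fin D => ℝ) d).integral_comp_comm
        integrable_condExp.integrableOn
    have h2 : ∫ ω in s, f ω d ∂μ =
        (ContinuousLinearMap.proj (R := ℝ) (φ := fun _ : Fin D => ℝ) d)
          (∫ ω in s, f ω ∂μ) :=
      (ContinuousLinearMap.proj (R := ℝ) (φ := fun _ : Fin D => ℝ) d).integral_comp_comm
        hf.integrableOn
    rw [h1, h2, setIntegral_condExp hm hf hs]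
  · exact StronglyMeasurable.aestronglyMeasurable ((continuous_apply d).comp_stronglyMeasurable
      (stronglyMeasurable_condExp (f := f) (m := m)))

lemma ae_sum_congr {Ω' : Type*} {mΩ : MeasurableSpace Ω'} {μ : Measure Ω'} {ι : Type*}
    (s : Finset ι) {f g : ι → Ω' → ℝ} (h : ∀ d ∈ s, f d =ᵐ[μ] g d) :
    (fun ω => ∑ d ∈ s, f d ω) =ᵐ[μ] (fun ω => ∑ d ∈ s, g d ω) := by
  classical
  induction s using Finset.induction_on with
  | empty => simp
  | @insert a s ha ih =>
    filter_upwards [h a (Finset.mem_insert_self a s),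
      ih (fun d hd => h d (Finset.mem_insert_of_mem hd))] with ω h1 h2
    simp [Finset.sum_insert ha, h1, h2]

lemma condexp_dotp {Ω' : Type*} {m mΩ : MeasurableSpace Ω'} {μ : @Measure Ω' mΩ}
    [IsProbabilityMeasure μ] (hm : m ≤ mΩ) {D : ℕ} {rv v : Ω' → Fin D → ℝ}
    (hrSM : StronglyMeasurable[m] rv)
    (hv : ∀ d, Integrable (fun ω => v ω d) μ)
    (hrv : ∀ d, Integrable (fun ω => rv ω d * v ω d) μ) :
    μ[fun ω => dotp (rv ω) (v ω)|m] =ᵐ[μ]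
      fun ω => dotp (rv ω) (fun d => (μ[fun ω' => v ω' d|m]) ω) := by
  have h1 : (fun ω => dotp (rv ω) (v ω)) = ∑ d ∈ Finset.univ, (fun ω => rv ω d * v ω d) := by
    funext ω; simp [dotp]
  rw [h1]
  refine (condExp_finset_sum (fun d _ => hrv d) m).trans ?_
  have h2 : ∀ d ∈ Finset.univ,
      μ[fun ω => rv ω d * v ω d|m] =ᵐ[μ]
        fun ω => rv ω d * (μ[fun ω' => v ω' d|m]) ω := by
    intro d _
    have hsm : StronglyMeasurable[m] (fun ω => rv ω d) :=
      (continuous_apply d).comp_stronglyMeasurable hrSM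
    exact condExp_mul_of_stronglyMeasurable_left (μ := μ) hsm
      (show Integrable ((fun ω => rv ω d) * (fun ω => v ω d)) μ from hrv d) (hv d)
  have h3 := ae_sum_congr Finset.univ h2
  refine Filter.EventuallyEq.trans (Filter.EventuallyEq.of_eq (by funext ω; simp))
    (h3.trans ?_)
  filter_upwards with ω
  simp [dotp]

lemma measurable_pi_sm {m : MeasurableSpace Ω} {D : ℕ} {f : Ω → Fin D → ℝ}
    (hf : ∀ d, Measurable[m] (fun ω => f ω d)) : StronglyMeasurable[m] f :=
  (measurable_pi_lambda f hf).stronglyMeasurable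

lemma measurable_sum_sm {m : MeasurableSpace Ω} {D : ℕ} {f : Fin D → Ω → ℝ}
    (hf : ∀ d, Measurable[m] (f d)) : StronglyMeasurable[m] (fun ω => ∑ d, f d ω) :=
  (Finset.measurable_sum _ (fun d _ => hf d)).stronglyMeasurable

/-- The backward-induction step. -/
lemma subsolution_step
    (μ : Measure Ω) [IsProbabilityMeasure μ] (ℱ : Filtration ℕ m0)
    (J D : ℕ) (F : ℕ → Ω → (Fin D → ℝ) → ℝ) (β : ℕ → Ω → Fin D → ℝ) (ξ : Ω → ℝ)
    (hset : Setting μ ℱ J D F β ξ) (hmono : MonoAssumption μ J D F β)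
    (Y : ℕ → Ω → ℝ) (hY : IsSolution μ ℱ J D F β ξ Y)
    (Ybar : ℕ → Ω → ℝ) (hYbar : IsSubsolution μ ℱ J D F β ξ Ybar)
    (r : ℕ → Ω → Fin D → ℝ) (hr : IsAdmissibleFrom μ ℱ 0 J D F r)
    (hropt : OptimalityCond μ ℱ 0 J D F β Ybar r)
    (M : ℕ → Ω → Fin D → ℝ) (hM : IsMartD μ ℱ M)
    (θ : ℕ → Ω → ℝ) (hθ : IsThetaLowFrom μ 0 J D F β ξ r M θ)
    (i : ℕ) (hiJ : i < J)
    (hθ'L : MemLinfMinus μ (θ (i+1)))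
    (ihl : ∀ᵐ ω ∂μ, Ybar (i+1) ω ≤ (μ[θ (i+1)|ℱ (i+1)]) ω)
    (ihu : ∀ᵐ ω ∂μ, (μ[θ (i+1)|ℱ (i+1)]) ω ≤ Y (i+1) ω) :
    MemLinfMinus μ (θ i) ∧
    (∀ᵐ ω ∂μ, F i ω (cexpV μ (ℱ i) (bprod β Ybar (i+1)) ω) ≤ (μ[θ i|ℱ i]) ω) ∧
    (∀ᵐ ω ∂μ, (μ[θ i|ℱ i]) ω ≤ Y i ω) := by
  classical
  have hle : ℱ i ≤ ℱ (i+1) := ℱ.mono (Nat.le_succ i)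
  have hi1J : i + 1 ≤ J := hiJ
  obtain ⟨hrSM, hrL, hFne, hcL⟩ := hr i (Nat.zero_le i) hiJ
  have hβL : MemLinfMinus μ (β (i+1)) := hset.β_int (i+1) hi1J
  have hβSM : StronglyMeasurable[ℱ (i+1)] (β (i+1)) := hset.β_adapted (i+1) hi1J
  have hYbarL : MemLinfMinus μ (Ybar (i+1)) := (hYbar.1 (i+1) hi1J).2
  have hYL : MemLinfMinus μ (Y (i+1)) := (hY.1 (i+1) hi1J).2
  have hoptae := hropt i (Nat.zero_le i) hiJ
  -- L^{∞-} membership of the various ingredients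
  have hdRβL : MemLinfMinus μ (fun ω => dotp (r i ω) (β (i+1) ω)) :=
    MemLinfMinus.sum (μ := μ) Finset.univ (f := fun d ω => r i ω d * β (i+1) ω d)
      (fun d _ => (hrL.comp_apply d).mul (hβL.comp_apply d))
  have hBL : MemLinfMinus μ (fun ω => dotp (r i ω) (fun d => M (i+1) ω d - M i ω d)) :=
    MemLinfMinus.sum (μ := μ) Finset.univ
      (f := fun d ω => r i ω d * (M (i+1) ω d - M i ω d))
      (fun d _ => (hrL.comp_apply d).mul (((hM.2 (i+1)).comp_apply d).sub ((hM.2 i).comp_apply d)))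
  have hAL : MemLinfMinus μ (fun ω => dotp (r i ω) (β (i+1) ω) * θ (i+1) ω) := hdRβL.mul hθ'L
  -- the recursion, rewritten
  have h0 : θ i =ᵐ[μ] fun ω => dotp (r i ω) (β (i+1) ω) * θ (i+1) ω
      - dotp (r i ω) (fun d => M (i+1) ω d - M i ω d) - rconj (F i ω) (r i ω) := by
    filter_upwards [hθ.2 i (Nat.zero_le i) hiJ] with ω h
    rw [h, dotp_mul_right]
  have hθiL : MemLinfMinus μ (θ i) := ((hAL.sub hBL).sub hcL).congr h0.symm
  -- (2) the martingale term has vanishing conditional expectation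
  have hMd : ∀ d : Fin D,
      μ[fun ω => M (i+1) ω d - M i ω d|ℱ i] =ᵐ[μ] fun _ => (0:ℝ) := by
    intro d
    have hint1 : Integrable (fun ω => M (i+1) ω d) μ := ((hM.2 (i+1)).comp_apply d).integrable
    have hint0 : Integrable (fun ω => M i ω d) μ := ((hM.2 i).comp_apply d).integrable
    have hsub := condExp_sub (μ := μ) (m := ℱ i) hint1 hint0
    have h1 : μ[fun ω => M (i+1) ω d|ℱ i] =ᵐ[μ] fun ω => M i ω d := by
      have hca := condexp_apply_ae (μ := μ) (ℱ.le i) (hM.1.integrable (i+1)) d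
      have hmart := hM.1.condExp_ae_eq (Nat.le_succ i)
      refine hca.symm.trans ?_
      filter_upwards [hmart] with ω h
      exact congrFun h d
    have h2 : μ[fun ω => M i ω d|ℱ i] = fun ω => M i ω d :=
      condExp_of_stronglyMeasurable (ℱ.le i)
        ((continuous_apply d).comp_stronglyMeasurable (hM.1.stronglyAdapted i)) hint0
    have hEq : (fun ω => M (i+1) ω d - M i ω d)
        = (fun ω => M (i+1) ω d) - (fun ω => M i ω d) := rfl
    rw [hEq]
    refine hsub.trans ?_
    filter_upwards [h1] with ω e1
    simp only [Pi.sub_apply, e1, h2, sub_self]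
  have hEB : μ[fun ω => dotp (r i ω) (fun d => M (i+1) ω d - M i ω d)|ℱ i]
      =ᵐ[μ] fun _ => (0:ℝ) := by
    have hdp := condexp_dotp (μ := μ) (ℱ.le i) (rv := r i)
      (v := fun ω d => M (i+1) ω d - M i ω d) hrSM
      (fun d => (((hM.2 (i+1)).comp_apply d).sub ((hM.2 i).comp_apply d)).integrable)
      (fun d => ((hrL.comp_apply d).mul
        (((hM.2 (i+1)).comp_apply d).sub ((hM.2 i).comp_apply d))).integrable)
    refine hdp.trans ?_
    have hall : ∀ᵐ ω ∂μ, ∀ d : Fin D,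
        (μ[fun ω' => M (i+1) ω' d - M i ω' d|ℱ i]) ω = 0 := ae_all_iff.2 (fun d => hMd d)
    filter_upwards [hall] with ω h
    simp [dotp, h]
  -- (3) conditional expectation of the conjugate term
  have hCYsm : StronglyMeasurable[ℱ i] (cexpV μ (ℱ i) (bprod β Ybar (i+1))) :=
    measurable_pi_sm (fun d => (stronglyMeasurable_condExp (m := ℱ i)).measurable)
  have hFcont : ∀ ω, Continuous (F i ω) := by
    intro ω
    have h := (hset.F_convex i hiJ ω).continuousOn isOpen_univ
    rwa [continuousOn_univ] at h
  have hFcomp : StronglyMeasurable[ℱ i]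
      (fun ω => F i ω (cexpV μ (ℱ i) (bprod β Ybar (i+1)) ω)) :=
    comp_sm (fun z => hset.F_adapted i hiJ z) hFcont hCYsm
  have hdotCYsm : StronglyMeasurable[ℱ i]
      (fun ω => dotp (r i ω) (cexpV μ (ℱ i) (bprod β Ybar (i+1)) ω)) :=
    measurable_sum_sm (fun d =>
      (((continuous_apply d).comp_stronglyMeasurable hrSM).measurable.mul
        (((continuous_apply d).comp_stronglyMeasurable hCYsm).measurable)))
  have hgSM : StronglyMeasurable[ℱ i]
      (fun ω => dotp (r i ω) (cexpV μ (ℱ i) (bprod β Ybar (i+1)) ω)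
        - F i ω (cexpV μ (ℱ i) (bprod β Ybar (i+1)) ω)) := hdotCYsm.sub hFcomp
  have hcg : (fun ω => rconj (F i ω) (r i ω)) =ᵐ[μ]
      (fun ω => dotp (r i ω) (cexpV μ (ℱ i) (bprod β Ybar (i+1)) ω)
        - F i ω (cexpV μ (ℱ i) (bprod β Ybar (i+1)) ω)) := by
    filter_upwards [hoptae] with ω h
    linarith
  have hEc : μ[fun ω => rconj (F i ω) (r i ω)|ℱ i]
      =ᵐ[μ] fun ω => rconj (F i ω) (r i ω) := by
    have hint : Integrable (fun ω => dotp (r i ω) (cexpV μ (ℱ i) (bprod β Ybar (i+1)) ω)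
        - F i ω (cexpV μ (ℱ i) (bprod β Ybar (i+1)) ω)) μ := hcL.integrable.congr hcg
    refine (condExp_congr_ae hcg).trans ?_
    rw [condExp_of_stronglyMeasurable (ℱ.le i) hgSM hint]
    exact hcg.symm
  -- (4) tower property and pull-out for the `A` term
  have hdRβSM1 : StronglyMeasurable[ℱ (i+1)] (fun ω => dotp (r i ω) (β (i+1) ω)) :=
    measurable_sum_sm (fun d =>
      (((continuous_apply d).comp_stronglyMeasurable (hrSM.mono hle)).measurable.mul
        (((continuous_apply d).comp_stronglyMeasurable hβSM).measurable)))
  have hpull : μ[fun ω => dotp (r i ω) (β (i+1) ω) * θ (i+1) ω|ℱ (i+1)] =ᵐ[μ]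
      fun ω => dotp (r i ω) (β (i+1) ω) * (μ[θ (i+1)|ℱ (i+1)]) ω :=
    condExp_mul_of_stronglyMeasurable_left (μ := μ) hdRβSM1
      (show Integrable ((fun ω => dotp (r i ω) (β (i+1) ω)) * θ (i+1)) μ from hAL.integrable)
      hθ'L.integrable
  have htower : μ[fun ω => dotp (r i ω) (β (i+1) ω) * θ (i+1) ω|ℱ i] =ᵐ[μ]
      μ[fun ω => dotp (r i ω) (β (i+1) ω) * (μ[θ (i+1)|ℱ (i+1)]) ω|ℱ i] := by
    have h1 := condExp_condExp_of_le (μ := μ)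
      (f := fun ω => dotp (r i ω) (β (i+1) ω) * θ (i+1) ω) hle (ℱ.le (i+1))
    exact h1.symm.trans (condExp_congr_ae hpull)
  -- positivity of `r⊤β`
  have hposae : ∀ᵐ ω ∂μ, 0 ≤ dotp (r i ω) (β (i+1) ω) := by
    have hmn : ∀ n : ℕ, ∀ᵐ ω ∂μ,
        F i ω (fun d => β (i+1) ω d * (-(n:ℝ))) ≤ F i ω (fun d => β (i+1) ω d * (0:ℝ)) := by
      intro n
      exact hmono i hiJ (fun _ => (0:ℝ)) (fun _ => (-(n:ℝ)))
        (MemLinfMinus.const 0) (MemLinfMinus.const _)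
        (Filter.Eventually.of_forall (fun ω => by simp))
    have hall := ae_all_iff.2 hmn
    filter_upwards [hall, hFne, hoptae] with ω h1 h2 h3
    exact key_pos (F i ω) (r i ω) (β (i+1) ω) _ h1 h2 h3
  -- lower and upper comparisons after the tower step
  have hint2 : Integrable (fun ω => dotp (r i ω) (β (i+1) ω) * (μ[θ (i+1)|ℱ (i+1)]) ω) μ :=
    integrable_condExp.congr hpull
  have hTl : (fun ω => dotp (r i ω) (β (i+1) ω) * Ybar (i+1) ω)
      ≤ᵐ[μ] fun ω => dotp (r i ω) (β (i+1) ω) * (μ[θ (i+1)|ℱ (i+1)]) ω := by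
    filter_upwards [ihl, hposae] with ω h1 h2
    exact mul_le_mul_of_nonneg_left h1 h2
  have hTu : (fun ω => dotp (r i ω) (β (i+1) ω) * (μ[θ (i+1)|ℱ (i+1)]) ω)
      ≤ᵐ[μ] fun ω => dotp (r i ω) (β (i+1) ω) * Y (i+1) ω := by
    filter_upwards [ihu, hposae] with ω h1 h2
    exact mul_le_mul_of_nonneg_left h1 h2
  have hmonoEl := condExp_mono (μ := μ) (m := ℱ i) (hdRβL.mul hYbarL).integrable hint2 hTl
  have hmonoEu := condExp_mono (μ := μ) (m := ℱ i) hint2 (hdRβL.mul hYL).integrable hTu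
  -- identification of the conditional expectations of `dRβ · X`
  have hexpYbar : μ[fun ω => dotp (r i ω) (β (i+1) ω) * Ybar (i+1) ω|ℱ i] =ᵐ[μ]
      fun ω => dotp (r i ω) (cexpV μ (ℱ i) (bprod β Ybar (i+1)) ω) := by
    have h1 : (fun ω => dotp (r i ω) (β (i+1) ω) * Ybar (i+1) ω)
        = fun ω => dotp (r i ω) (fun d => β (i+1) ω d * Ybar (i+1) ω) := by
      funext ω; rw [dotp_mul_right]
    rw [h1]
    exact condexp_dotp (μ := μ) (ℱ.le i) (rv := r i)
      (v := fun ω d => β (i+1) ω d * Ybar (i+1) ω) hrSM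
      (fun d => ((hβL.comp_apply d).mul hYbarL).integrable)
      (fun d => ((hrL.comp_apply d).mul ((hβL.comp_apply d).mul hYbarL)).integrable)
  have hexpY : μ[fun ω => dotp (r i ω) (β (i+1) ω) * Y (i+1) ω|ℱ i] =ᵐ[μ]
      fun ω => dotp (r i ω) (cexpV μ (ℱ i) (bprod β Y (i+1)) ω) := by
    have h1 : (fun ω => dotp (r i ω) (β (i+1) ω) * Y (i+1) ω)
        = fun ω => dotp (r i ω) (fun d => β (i+1) ω d * Y (i+1) ω) := by
      funext ω; rw [dotp_mul_right]
    rw [h1]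
    exact condexp_dotp (μ := μ) (ℱ.le i) (rv := r i)
      (v := fun ω d => β (i+1) ω d * Y (i+1) ω) hrSM
      (fun d => ((hβL.comp_apply d).mul hYL).integrable)
      (fun d => ((hrL.comp_apply d).mul ((hβL.comp_apply d).mul hYL)).integrable)
  -- splitting of `E_i[θ_i]`
  have e1 : μ[θ i|ℱ i] =ᵐ[μ] fun ω =>
      (μ[fun ω' => dotp (r i ω') (β (i+1) ω') * θ (i+1) ω'
        - dotp (r i ω') (fun d => M (i+1) ω' d - M i ω' d)|ℱ i]) ω
      - (μ[fun ω' => rconj (F i ω') (r i ω')|ℱ i]) ω := by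
    refine (condExp_congr_ae h0).trans ?_
    exact condExp_sub (μ := μ) (m := ℱ i) (hAL.sub hBL).integrable hcL.integrable
  have e2 : μ[fun ω' => dotp (r i ω') (β (i+1) ω') * θ (i+1) ω'
        - dotp (r i ω') (fun d => M (i+1) ω' d - M i ω' d)|ℱ i] =ᵐ[μ] fun ω =>
      (μ[fun ω' => dotp (r i ω') (β (i+1) ω') * θ (i+1) ω'|ℱ i]) ω
      - (μ[fun ω' => dotp (r i ω') (fun d => M (i+1) ω' d - M i ω' d)|ℱ i]) ω :=
    condExp_sub (μ := μ) (m := ℱ i) hAL.integrable hBL.integrable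
  have hsplit : μ[θ i|ℱ i] =ᵐ[μ] fun ω =>
      (μ[fun ω' => dotp (r i ω') (β (i+1) ω') * θ (i+1) ω'|ℱ i]) ω
      - (μ[fun ω' => dotp (r i ω') (fun d => M (i+1) ω' d - M i ω' d)|ℱ i]) ω
      - (μ[fun ω' => rconj (F i ω') (r i ω')|ℱ i]) ω := by
    filter_upwards [e1, e2] with ω a b
    rw [a, b]
  -- conclusion
  have hfen : ∀ᵐ ω ∂μ, dotp (r i ω) (cexpV μ (ℱ i) (bprod β Y (i+1)) ω)
      - rconj (F i ω) (r i ω) ≤ F i ω (cexpV μ (ℱ i) (bprod β Y (i+1)) ω) := by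
    filter_upwards [hFne] with ω h
    exact fenchel _ _ _ h
  have hYieq := hY.2.2 i hiJ
  refine ⟨hθiL, ?_, ?_⟩
  · filter_upwards [hsplit, hEB, hEc, hmonoEl, htower, hexpYbar, hoptae]
      with ω e1 e2 e3 e4 e5 e6 e7
    rw [e1, e2, e3, e5]
    rw [e6] at e4
    linarith
  · filter_upwards [hsplit, hEB, hEc, hmonoEu, htower, hexpY, hfen, hYieq]
      with ω e1 e2 e3 e4 e5 e6 e7 e8
    rw [e1, e2, e3, e5, e8]
    rw [e6] at e4
    linarith

/-- Improvement of subsolutions, inequality part: let `Ȳ` be a subsolution and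
`r̄ ∈ A_0` a control satisfying
`r̄_i^⊤ E_i[β_{i+1} Ȳ_{i+1}] − F_i^{#}(r̄_i) = F_i(E_i[β_{i+1} Ȳ_{i+1}])` a.s. Then for any
`M ∈ M_D` and all `i = 0,…,J-1`,
`Y_i ≥ E_i[θ_i^{low}(r̄,M)] ≥ F_i(E_i[β_{i+1} Ȳ_{i+1}]) ≥ Ȳ_i` `P`-a.s. -/
theorem subsolution_improvement_inequalities
    (μ : Measure Ω) [IsProbabilityMeasure μ] (ℱ : Filtration ℕ m0)
    (J D : ℕ) (F : ℕ → Ω → (Fin D → ℝ) → ℝ) (β : ℕ → Ω → Fin D → ℝ) (ξ : Ω → ℝ)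
    (hset : Setting μ ℱ J D F β ξ) (hmono : MonoAssumption μ J D F β)
    (Y : ℕ → Ω → ℝ) (hY : IsSolution μ ℱ J D F β ξ Y)
    (Ybar : ℕ → Ω → ℝ) (hYbar : IsSubsolution μ ℱ J D F β ξ Ybar)
    (r : ℕ → Ω → Fin D → ℝ)
    (hr : IsAdmissibleFrom μ ℱ 0 J D F r)
    (hropt : OptimalityCond μ ℱ 0 J D F β Ybar r)
    (M : ℕ → Ω → Fin D → ℝ) (hM : IsMartD μ ℱ M)
    (θ : ℕ → Ω → ℝ) (hθ : IsThetaLowFrom μ 0 J D F β ξ r M θ) :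
    ∀ i < J, ∀ᵐ ω ∂μ,
      Ybar i ω ≤ F i ω (cexpV μ (ℱ i) (bprod β Ybar (i + 1)) ω) ∧
      F i ω (cexpV μ (ℱ i) (bprod β Ybar (i + 1)) ω) ≤ (μ[θ i|ℱ i]) ω ∧
      (μ[θ i|ℱ i]) ω ≤ Y i ω := by
  have key : ∀ k : ℕ, ∀ i : ℕ, i + k = J →
      MemLinfMinus μ (θ i) ∧ (∀ᵐ ω ∂μ, Ybar i ω ≤ (μ[θ i|ℱ i]) ω) ∧
      (∀ᵐ ω ∂μ, (μ[θ i|ℱ i]) ω ≤ Y i ω) ∧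
      (i < J → ∀ᵐ ω ∂μ,
        F i ω (cexpV μ (ℱ i) (bprod β Ybar (i + 1)) ω) ≤ (μ[θ i|ℱ i]) ω) := by
    intro k
    induction k with
    | zero =>
      intro i hi
      have hiJ : i = J := by omega
      subst hiJ
      have hθJ : θ i =ᵐ[μ] ξ := hθ.1
      have hEθJ : μ[θ i|ℱ i] =ᵐ[μ] ξ := by
        refine (condExp_congr_ae hθJ).trans ?_
        rw [condExp_of_stronglyMeasurable (ℱ.le i) hset.ξ_meas hset.ξ_int.integrable]
      refine ⟨hset.ξ_int.congr hθJ.symm, ?_, ?_, fun h => absurd h (lt_irrefl i)⟩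
      · filter_upwards [hEθJ, hYbar.2.1] with ω e1 e2
        rw [e1]
        exact e2
      · filter_upwards [hEθJ, hY.2.1] with ω e1 e2
        rw [e1, e2]
    | succ k ih =>
      intro i hi
      have hiJ : i < J := by omega
      have hIH := ih (i+1) (by omega)
      obtain ⟨l1, l2, l3⟩ := subsolution_step μ ℱ J D F β ξ hset hmono Y hY Ybar hYbar r hr
        hropt M hM θ hθ i hiJ hIH.1 hIH.2.1 hIH.2.2.1
      refine ⟨l1, ?_, l3, fun _ => l2⟩
      filter_upwards [hYbar.2.2 i hiJ, l2] with ω a b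
      linarith
  intro i hiJ
  have h := key (J - i) i (by omega)
  filter_upwards [hYbar.2.2 i hiJ, h.2.2.2 hiJ, h.2.2.1] with ω a b c2
  exact ⟨a, b, c2⟩

end
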